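/- The ZH-gadget satisfies a bialgebra law with the ZH-monoid: two copies of the gadget sharing a copied control, with corresponding outputs merged pairwise by the monoid, equal a single gadget applied after the monoid. Precisely, G * (I₂ ⊗ₖ M) = (M ⊗ₖ M) * (I₂ ⊗ₖ SWAP ⊗ₖ I₂) * (G ⊗ₖ G) * (I₂ ⊗ₖ SWAP ⊗ₖ I₂) * (Δ ⊗ₖ I₂ ⊗ₖ I₂), where the composites are compared after the canonical associativity reindexings of iterated products of Fin 2. -/
import Mathlib


open Kronecker Matrix

/-- The ZH-monoid `M`, determined on the standard basis by
`M|00⟩ = |0⟩`, `M|01⟩ = |1⟩`, `M|10⟩ = |1⟩`, `M|11⟩ = 0`. -/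
def ZHmonoid : Matrix (Fin 2) (Fin 2 × Fin 2) ℂ :=
  Matrix.of fun i p =>
    if p = (0, 0) then ![1, 0] i
    else if p = (1, 1) then 0
    else ![0, 1] i

/-- The ZH-gadget `G`, determined on the standard basis by
`G|00⟩ = |00⟩`, `G|01⟩ = |10⟩`, `G|10⟩ = |00⟩`, `G|11⟩ = |01⟩`. -/
def ZHgadget : Matrix (Fin 2 × Fin 2) (Fin 2 × Fin 2) ℂ :=
  Matrix.of fun q p =>
    if p.1 = 0 then (if q = (p.2, 0) then 1 else 0)
    else (if q = (0, p.2) then 1 else 0)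

/-- The copy map `Δ`, with `Δ|x⟩ = |xx⟩`. -/
def copyM : Matrix (Fin 2 × Fin 2) (Fin 2) ℂ :=
  Matrix.of fun q x => if q = (x, x) then 1 else 0

/-- The SWAP permutation matrix, with `SWAP|ab⟩ = |ba⟩`. -/
def SWAP : Matrix (Fin 2 × Fin 2) (Fin 2 × Fin 2) ℂ :=
  Matrix.of fun q p => if q = (p.2, p.1) then 1 else 0

/-- The canonical associativity reindexing
`(Fin 2 × (Fin 2 × Fin 2)) × Fin 2 ≃ (Fin 2 × Fin 2) × (Fin 2 × Fin 2)`. -/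
def assocE : (Fin 2 × (Fin 2 × Fin 2)) × Fin 2 ≃ (Fin 2 × Fin 2) × (Fin 2 × Fin 2) :=
  ((Equiv.prodAssoc (Fin 2) (Fin 2) (Fin 2)).symm.prodCongr (Equiv.refl (Fin 2))).trans
    (Equiv.prodAssoc (Fin 2 × Fin 2) (Fin 2) (Fin 2))

/-- The middle permutation `I₂ ⊗ₖ SWAP ⊗ₖ I₂`, reindexed to act on
`(Fin 2 × Fin 2) × (Fin 2 × Fin 2)`. -/
def midSwap : Matrix ((Fin 2 × Fin 2) × (Fin 2 × Fin 2)) ((Fin 2 × Fin 2) × (Fin 2 × Fin 2)) ℂ :=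
  Matrix.reindex assocE assocE
    (((1 : Matrix (Fin 2) (Fin 2) ℂ) ⊗ₖ SWAP) ⊗ₖ (1 : Matrix (Fin 2) (Fin 2) ℂ))

/-- The map `Δ ⊗ₖ I₂ ⊗ₖ I₂`, reindexed via the canonical associativity reindexings. -/
def copyII : Matrix ((Fin 2 × Fin 2) × (Fin 2 × Fin 2)) (Fin 2 × (Fin 2 × Fin 2)) ℂ :=
  Matrix.reindex (Equiv.prodAssoc (Fin 2 × Fin 2) (Fin 2) (Fin 2))
    (Equiv.prodAssoc (Fin 2) (Fin 2) (Fin 2))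
    ((copyM ⊗ₖ (1 : Matrix (Fin 2) (Fin 2) ℂ)) ⊗ₖ (1 : Matrix (Fin 2) (Fin 2) ℂ))

lemma assocE_symm_apply (a b c d : Fin 2) :
    assocE.symm ((a, b), (c, d)) = ((a, (b, c)), d) := rfl

lemma midSwap_apply (i j : (Fin 2 × Fin 2) × (Fin 2 × Fin 2)) :
    midSwap i j = if j = ((i.1.1, i.2.1), (i.1.2, i.2.2)) then 1 else 0 := by
  obtain ⟨⟨a, b⟩, c, d⟩ := i
  obtain ⟨⟨p, q⟩, r, s⟩ := j
  simp only [midSwap, Matrix.reindex_apply, Matrix.submatrix_apply, assocE_symm_apply,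
    Matrix.kroneckerMap_apply, SWAP, Matrix.of_apply, Matrix.one_apply, Prod.mk.injEq]
  by_cases h1 : a = p <;> by_cases h2 : b = r <;> by_cases h3 : c = q <;> by_cases h4 : d = s <;>
    simp [h1, h2, h3, h4, eq_comm]

lemma copyII_apply (i : (Fin 2 × Fin 2) × (Fin 2 × Fin 2)) (j : Fin 2 × (Fin 2 × Fin 2)) :
    copyII i j = if i = ((j.1, j.1), j.2) then 1 else 0 := by
  obtain ⟨⟨a, b⟩, c, d⟩ := i
  obtain ⟨x, y, z⟩ := j
  simp only [copyII, Matrix.reindex_apply, Matrix.submatrix_apply,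
    Matrix.kroneckerMap_apply, copyM, Matrix.of_apply, Matrix.one_apply, Prod.mk.injEq,
    Equiv.prodAssoc_symm_apply]
  by_cases h1 : a = x <;> by_cases h2 : b = x <;> by_cases h3 : c = y <;> by_cases h4 : d = z <;>
    simp [h1, h2, h3, h4]

lemma midSwap_mul_apply (X : Matrix ((Fin 2 × Fin 2) × (Fin 2 × Fin 2)) (Fin 2 × (Fin 2 × Fin 2)) ℂ)
    (i : (Fin 2 × Fin 2) × (Fin 2 × Fin 2)) (j : Fin 2 × (Fin 2 × Fin 2)) :
    (midSwap * X) i j = X ((i.1.1, i.2.1), (i.1.2, i.2.2)) j := by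
  rw [Matrix.mul_apply]
  simp only [midSwap_apply, ite_mul, one_mul, zero_mul]
  rw [Finset.sum_ite_eq' (Finset.univ) ((i.1.1, i.2.1), (i.1.2, i.2.2)) (fun k => X k j)]
  simp

lemma mid_copy_apply (i : (Fin 2 × Fin 2) × (Fin 2 × Fin 2)) (j : Fin 2 × (Fin 2 × Fin 2)) :
    (midSwap * copyII) i j = if i = ((j.1, j.2.1), (j.1, j.2.2)) then 1 else 0 := by
  obtain ⟨⟨a, b⟩, c, d⟩ := i
  obtain ⟨x, y, z⟩ := j
  rw [midSwap_mul_apply, copyII_apply]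
  simp only [Prod.mk.injEq]
  by_cases h1 : a = x <;> by_cases h2 : b = y <;> by_cases h3 : c = x <;> by_cases h4 : d = z <;>
    simp [h1, h2, h3, h4]

lemma g_mid_copy_apply (i : (Fin 2 × Fin 2) × (Fin 2 × Fin 2)) (j : Fin 2 × (Fin 2 × Fin 2)) :
    (ZHgadget ⊗ₖ ZHgadget * (midSwap * copyII)) i j =
      ZHgadget i.1 (j.1, j.2.1) * ZHgadget i.2 (j.1, j.2.2) := by
  rw [Matrix.mul_apply]
  simp only [mid_copy_apply, mul_ite, mul_one, mul_zero]
  rw [Finset.sum_ite_eq' (Finset.univ) ((j.1, j.2.1), (j.1, j.2.2))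
    (fun k => (ZHgadget ⊗ₖ ZHgadget) ((i.1, i.2)) k)]
  simp [Matrix.kroneckerMap_apply]

lemma mid_g_mid_copy_apply (i : (Fin 2 × Fin 2) × (Fin 2 × Fin 2)) (j : Fin 2 × (Fin 2 × Fin 2)) :
    (midSwap * (ZHgadget ⊗ₖ ZHgadget * (midSwap * copyII))) i j =
      ZHgadget (i.1.1, i.2.1) (j.1, j.2.1) * ZHgadget (i.1.2, i.2.2) (j.1, j.2.2) := by
  rw [midSwap_mul_apply, g_mid_copy_apply]

lemma rhs_apply (p : Fin 2 × Fin 2) (j : Fin 2 × (Fin 2 × Fin 2)) :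
    ((ZHmonoid ⊗ₖ ZHmonoid) * (midSwap * (ZHgadget ⊗ₖ ZHgadget * (midSwap * copyII)))) p j =
      ∑ k : (Fin 2 × Fin 2) × (Fin 2 × Fin 2), (ZHmonoid ⊗ₖ ZHmonoid) p k *
        (ZHgadget (k.1.1, k.2.1) (j.1, j.2.1) * ZHgadget (k.1.2, k.2.2) (j.1, j.2.2)) := by
  rw [Matrix.mul_apply]
  exact Finset.sum_congr rfl fun k _ => by rw [mid_g_mid_copy_apply]

set_option maxHeartbeats 1000000 in
/-- The ZH-gadget satisfies a bialgebra law with the ZH-monoid: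
`G * (I₂ ⊗ₖ M) = (M ⊗ₖ M) * (I₂ ⊗ₖ SWAP ⊗ₖ I₂) * (G ⊗ₖ G) * (I₂ ⊗ₖ SWAP ⊗ₖ I₂) * (Δ ⊗ₖ I₂ ⊗ₖ I₂)`. -/
theorem ZHgadget_monoid_bialgebra :
    ZHgadget * ((1 : Matrix (Fin 2) (Fin 2) ℂ) ⊗ₖ ZHmonoid) =
      (ZHmonoid ⊗ₖ ZHmonoid) * midSwap * (ZHgadget ⊗ₖ ZHgadget) * midSwap * copyII := by
  have hassoc : (ZHmonoid ⊗ₖ ZHmonoid) * midSwap * (ZHgadget ⊗ₖ ZHgadget) * midSwap * copyII =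
      (ZHmonoid ⊗ₖ ZHmonoid) * (midSwap * (ZHgadget ⊗ₖ ZHgadget * (midSwap * copyII))) := by
    simp only [Matrix.mul_assoc]
  rw [hassoc]
  ext ⟨a, b⟩ ⟨x, y, z⟩
  rw [rhs_apply, Matrix.mul_apply]
  simp only [Fintype.sum_prod_type, Fin.sum_univ_two, Matrix.kroneckerMap_apply,
    ZHmonoid, ZHgadget, Matrix.of_apply, Matrix.one_apply]
  fin_cases a <;> fin_cases b <;> fin_cases x <;> fin_cases y <;> fin_cases z <;>
    norm_num [Prod.ext_iff]
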